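/- For any torsion-free abelian group G, G contains an isomorphic copy of ℚ if and only if there exists x ∈ G with x ≠ 0 such that for every n ∈ ℕ, n! divides x in G (i.e., for every n there exists y ∈ G with (n! : ℤ) • y = x). -/

import Mathlib

/-- A group `G` is torsion-free: `n • x ≠ 0` for every `x ≠ 0` and integer `n > 0`. -/
def IsTorsionFreeGroup (G : Type*) [AddCommGroup G] : Prop :=
  ∀ x : G, x ≠ 0 → ∀ n : ℤ, 0 < n → n • x ≠ 0

/-- `G` contains a subgroup isomorphic to `A`. -/
def ContainsCopy (A G : Type*) [AddCommGroup A] [AddCommGroup G] : Prop :=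
  ∃ f : A →+ G, Function.Injective f

lemma int_of_den_dvd (q : ℚ) (m : ℕ) (h : q.den ∣ m) :
    (((q * m).num : ℤ) : ℚ) = q * m := by
  obtain ⟨k, hk⟩ := h
  have hd : (q.den : ℚ) ≠ 0 := by
    exact_mod_cast q.den_nz
  have h1 : q * (m : ℚ) = ((q.num * k : ℤ) : ℚ) := by
    rw [hk]
    push_cast
    rw [← mul_assoc, Rat.mul_den_eq_num]
  rw [h1, Rat.num_intCast]

lemma cancel_smul {G : Type*} [AddCommGroup G] (hG : IsTorsionFreeGroup G)
    (m : ℤ) (hm : 0 < m) {a b : G} (h : m • a = m • b) : a = b := by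
  by_contra hne
  have hab : a - b ≠ 0 := sub_ne_zero.mpr hne
  exact hG _ hab m hm (by rw [smul_sub, h, sub_self])

/-- A torsion-free group contains a copy of `ℚ` iff it has a nonzero element
divisible by `n!` for every `n`. -/
theorem containsCopy_rat_iff (G : Type*) [AddCommGroup G]
    (hG : IsTorsionFreeGroup G) :
    ContainsCopy ℚ G ↔
      ∃ x : G, x ≠ 0 ∧ ∀ n : ℕ, ∃ y : G, (n.factorial : ℤ) • y = x := by
  constructor
  · rintro ⟨f, hf⟩
    refine ⟨f 1, ?_, fun n => ⟨f (1 / n.factorial), ?_⟩⟩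
    · intro h
      have h1 : (1 : ℚ) = 0 := hf (by simpa using h)
      norm_num at h1
    · rw [← map_zsmul]
      congr 1
      have hn : ((n.factorial : ℚ)) ≠ 0 := by
        exact_mod_cast n.factorial_ne_zero
      rw [zsmul_eq_mul]
      push_cast
      field_simp
  · rintro ⟨x, hx, hdiv⟩
    choose g hg using hdiv
    have key : ∀ (q : ℚ) (n m : ℕ), n ≤ m → q.den ∣ n.factorial →
        (q * n.factorial).num • g n = (q * m.factorial).num • g m := by
      intro q n m hnm hdvd
      obtain ⟨k, hk⟩ := Nat.factorial_dvd_factorial hnm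
      have hdvd' : q.den ∣ m.factorial := hk ▸ Dvd.dvd.mul_right hdvd k
      have hpos : (0 : ℤ) < n.factorial := by exact_mod_cast n.factorial_pos
      have hgk : (k : ℤ) • g m = g n := by
        apply cancel_smul hG _ hpos
        rw [smul_smul]
        have hcast : ((n.factorial : ℤ) * k) = (m.factorial : ℤ) := by
          exact_mod_cast hk.symm
        rw [hcast, hg, hg]
      have hnum : (q * m.factorial).num = (q * n.factorial).num * k := by
        have hc : (((q * m.factorial).num : ℤ) : ℚ)
            = (((q * n.factorial).num * k : ℤ) : ℚ) := by
          rw [int_of_den_dvd q m.factorial hdvd', Int.cast_mul,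
            int_of_den_dvd q n.factorial hdvd, hk]
          push_cast
          ring
        exact_mod_cast hc
      rw [hnum, mul_smul, hgk]
    set f : ℚ → G := fun q => (q * q.den.factorial).num • g q.den with hfdef
    have hden : ∀ q : ℚ, q.den ∣ q.den.factorial := fun q => Nat.dvd_factorial q.pos le_rfl
    have hstab : ∀ (q : ℚ) (m : ℕ), q.den ≤ m →
        f q = (q * m.factorial).num • g m := fun q m h => key q q.den m h (hden q)
    have hadd : ∀ a b : ℚ, f (a + b) = f a + f b := by
      intro a b
      set M := a.den * b.den with hM
      have hMpos : 0 < M := Nat.mul_pos a.pos b.pos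
      have ha : a.den ≤ M := Nat.le_mul_of_pos_right _ b.pos
      have hb : b.den ≤ M := Nat.le_mul_of_pos_left _ a.pos
      have hab : (a + b).den ≤ M := Nat.le_of_dvd hMpos (Rat.add_den_dvd a b)
      rw [hstab (a + b) M hab, hstab a M ha, hstab b M hb]
      have hnum : ((a + b) * M.factorial).num
          = (a * M.factorial).num + (b * M.factorial).num := by
        have hc : ((((a + b) * M.factorial).num : ℤ) : ℚ)
            = (((a * M.factorial).num + (b * M.factorial).num : ℤ) : ℚ) := by
          rw [int_of_den_dvd _ _ (Nat.dvd_factorial (a + b).pos hab), Int.cast_add,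
            int_of_den_dvd _ _ (Nat.dvd_factorial a.pos ha),
            int_of_den_dvd _ _ (Nat.dvd_factorial b.pos hb)]
          ring
        exact_mod_cast hc
      rw [hnum, add_smul]
    refine ⟨AddMonoidHom.mk' f hadd, ?_⟩
    rw [injective_iff_map_eq_zero]
    intro q hq
    by_contra hne
    have hq' : (q * q.den.factorial).num • g q.den = 0 := hq
    set c := (q * q.den.factorial).num with hc
    have hcne : c ≠ 0 := by
      intro h0
      have h1 := int_of_den_dvd q q.den.factorial (hden q)
      rw [← hc, h0] at h1
      have hfne : ((q.den.factorial : ℚ)) ≠ 0 := by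
        exact_mod_cast q.den.factorial_ne_zero
      have : q = 0 := by
        field_simp at h1
        rw [Int.cast_zero] at h1
        exact (mul_eq_zero.mp h1.symm).resolve_right hfne
      exact hne this
    have hgne : g q.den ≠ 0 := by
      intro h0
      apply hx
      rw [← hg q.den, h0, smul_zero]
    rcases hcne.lt_or_gt with hlt | hgt
    · exact hG _ hgne (-c) (by linarith) (by rw [neg_smul, hq', neg_zero])
    · exact hG _ hgne c hgt hq'
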